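/- A permutation σ satisfies: s(σ) avoids both 132 and 312 if and only if σ avoids the classical patterns 1342, 3142, 3412 and the vincular pattern 342̲1̲. That is, s^{-1}(Av(132,312)) = Av(1342, 3142, 3412, 342̲1̲). -/

import Mathlib

/-- West's stack-sorting map, implemented with fuel (fuel = length suffices). -/
def ssAux : ℕ → List ℕ → List ℕ
  | 0, _ => []
  | _ + 1, [] => []
  | fuel + 1, l =>
    let m := l.foldr max 0
    let i := l.idxOf m
    ssAux fuel (l.take i) ++ ssAux fuel (l.drop (i + 1)) ++ [m]

/-- West's stack-sorting map `s`. -/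
def stackSort (l : List ℕ) : List ℕ := ssAux l.length l

/-- `σ` contains the classical pattern `τ`. -/
def Contains (τ σ : List ℕ) : Prop :=
  ∃ f : Fin τ.length → Fin σ.length, StrictMono f ∧
    ∀ i j : Fin τ.length, τ.get i < τ.get j ↔ σ.get (f i) < σ.get (f j)

/-- `σ` avoids the classical pattern `τ`. -/
def Avoids (σ τ : List ℕ) : Prop := ¬ Contains τ σ

/-- `σ` contains the vincular pattern 342̲1̲: indices `i₁ < i₂ < i₃ < i₄` with `i₄ = i₃ + 1`
and `σ(i₄) < σ(i₃) < σ(i₁) < σ(i₂)`. -/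
def Contains3421v (σ : List ℕ) : Prop :=
  ∃ i1 i2 i3 i4 : Fin σ.length, i1 < i2 ∧ i2 < i3 ∧ i3 < i4 ∧ (i4 : ℕ) = (i3 : ℕ) + 1 ∧
    σ.get i4 < σ.get i3 ∧ σ.get i3 < σ.get i1 ∧ σ.get i1 < σ.get i2


lemma foldr_max_mem (l : List ℕ) (h : l ≠ []) : l.foldr max 0 ∈ l := by
  induction l with
  | nil => simp at h
  | cons a t ih =>
    simp only [List.foldr_cons]
    rcases eq_or_ne t [] with rfl | ht
    · simp
    · rcases le_total (t.foldr max 0) a with h1 | h1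
      · simp [max_eq_left h1]
      · rw [max_eq_right h1]; exact List.mem_cons_of_mem _ (ih ht)

lemma le_foldr_max (l : List ℕ) (x : ℕ) (hx : x ∈ l) : x ≤ l.foldr max 0 := by
  induction l with
  | nil => simp at hx
  | cons a t ih =>
    simp only [List.foldr_cons]
    rcases List.mem_cons.1 hx with rfl | hx
    · exact le_max_left _ _
    · exact le_trans (ih hx) (le_max_right _ _)

lemma ssAux_stable : ∀ f₁ : ℕ, ∀ f₂ : ℕ, ∀ l : List ℕ, l.length ≤ f₁ → l.length ≤ f₂ →
    ssAux f₁ l = ssAux f₂ l := by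
  intro f₁
  induction f₁ with
  | zero =>
    intro f₂ l h1 _
    have : l = [] := List.length_eq_zero_iff.1 (Nat.le_zero.1 h1)
    subst this
    cases f₂ <;> rfl
  | succ f ih =>
    intro f₂ l h1 h2
    rcases eq_or_ne l [] with rfl | hl
    · cases f₂ <;> rfl
    · have hlen : 0 < l.length := List.length_pos_iff.2 hl
      obtain ⟨g, rfl⟩ : ∃ g, f₂ = g + 1 := ⟨f₂ - 1, by omega⟩
      have hm : l.foldr max 0 ∈ l := foldr_max_mem l hl
      have hi : l.idxOf (l.foldr max 0) < l.length := List.idxOf_lt_length_iff.2 hm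
      set m := l.foldr max 0
      set i := l.idxOf m
      have htake : (l.take i).length ≤ f := by
        rw [List.length_take]; omega
      have hdrop : (l.drop (i+1)).length ≤ f := by
        rw [List.length_drop]; omega
      have htake' : (l.take i).length ≤ g := by
        rw [List.length_take]; omega
      have hdrop' : (l.drop (i+1)).length ≤ g := by
        rw [List.length_drop]; omega
      have e1 : ∀ f' : ℕ, ssAux (f'+1) l = ssAux f' (l.take i) ++ ssAux f' (l.drop (i+1)) ++ [m] := by
        intro f'
        obtain ⟨a, t, rfl⟩ : ∃ a t, l = a :: t := by
          cases l with
          | nil => exact absurd rfl hl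
          | cons a t => exact ⟨a, t, rfl⟩
        rw [ssAux]
        exact fun h => List.cons_ne_nil _ _ h
      rw [e1 f, e1 g, ih g (l.take i) htake htake', ih g (l.drop (i+1)) hdrop hdrop']

lemma ssAux_unfold (l : List ℕ) (hl : l ≠ []) (f : ℕ) :
    ssAux (f+1) l = ssAux f (l.take (l.idxOf (l.foldr max 0)))
      ++ ssAux f (l.drop (l.idxOf (l.foldr max 0) + 1)) ++ [l.foldr max 0] := by
  obtain ⟨a, t, rfl⟩ : ∃ a t, l = a :: t := by
    cases l with
    | nil => exact absurd rfl hl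
    | cons a t => exact ⟨a, t, rfl⟩
  rw [ssAux]
  exact fun h => List.cons_ne_nil _ _ h

lemma stackSort_decomp (l : List ℕ) (hl : l ≠ []) :
    stackSort l = stackSort (l.take (l.idxOf (l.foldr max 0)))
      ++ stackSort (l.drop (l.idxOf (l.foldr max 0) + 1)) ++ [l.foldr max 0] := by
  have hlen : 0 < l.length := List.length_pos_iff.2 hl
  have hm : l.foldr max 0 ∈ l := foldr_max_mem l hl
  have hi : l.idxOf (l.foldr max 0) < l.length := List.idxOf_lt_length_iff.2 hm
  set m := l.foldr max 0
  set i := l.idxOf m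
  obtain ⟨f, hf⟩ : ∃ f, l.length = f + 1 := ⟨l.length - 1, by omega⟩
  have htake : (l.take i).length ≤ f := by rw [List.length_take]; omega
  have hdrop : (l.drop (i+1)).length ≤ f := by rw [List.length_drop]; omega
  unfold stackSort
  rw [hf, ssAux_unfold l hl f,
    ssAux_stable f (l.take i).length (l.take i) htake le_rfl,
    ssAux_stable f (l.drop (i+1)).length (l.drop (i+1)) hdrop le_rfl]

lemma stackSort_perm (l : List ℕ) : (stackSort l).Perm l := by
  generalize hn : l.length = n
  induction n using Nat.strong_induction_on generalizing l with
  | _ n ih =>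
  subst hn
  rcases eq_or_ne l [] with rfl | hl
  · simp [stackSort, ssAux]
  · have hlen : 0 < l.length := List.length_pos_iff.2 hl
    have hm : l.foldr max 0 ∈ l := foldr_max_mem l hl
    have hi : l.idxOf (l.foldr max 0) < l.length := List.idxOf_lt_length_iff.2 hm
    set m := l.foldr max 0 with hmdef
    set i := l.idxOf m with hidef
    have htake : (l.take i).length < l.length := by rw [List.length_take]; omega
    have hdrop : (l.drop (i+1)).length < l.length := by rw [List.length_drop]; omega
    have p1 := ih _ htake _ rfl
    have p2 := ih _ hdrop _ rfl
    rw [stackSort_decomp l hl]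
    have hsplit : l.take i ++ m :: l.drop (i+1) = l := by
      conv_rhs => rw [← List.take_append_drop i l]
      rw [List.drop_eq_getElem_cons hi, List.getElem_idxOf hi]
    refine List.Perm.trans ((p1.append p2).append (List.Perm.refl [m])) ?_
    rw [List.append_assoc]
    have hfin : (l.take i ++ (m :: l.drop (i+1))).Perm l := by rw [hsplit]
    exact List.Perm.trans ((List.Perm.refl _).append (List.perm_append_singleton _ _)) hfin


-- helpers
lemma getD_app_left {a b : List ℕ} {i : ℕ} (h : i < a.length) :
    (a ++ b).getD i 0 = a.getD i 0 := List.getD_append a b 0 i h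

lemma getD_app_right {a b : List ℕ} {i : ℕ} (h : a.length ≤ i) :
    (a ++ b).getD i 0 = b.getD (i - a.length) 0 := List.getD_append_right a b 0 i h

lemma getD_mem {l : List ℕ} {i : ℕ} (h : i < l.length) : l.getD i 0 ∈ l := by
  rw [List.getD_eq_getElem _ _ h]; exact List.getElem_mem h

lemma mem_getD {l : List ℕ} {x : ℕ} (h : x ∈ l) : ∃ i, i < l.length ∧ l.getD i 0 = x := by
  obtain ⟨i, hi, rfl⟩ := List.mem_iff_getElem.1 h
  exact ⟨i, hi, List.getD_eq_getElem _ _ hi⟩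

/-- every entry of `l` is strictly above, or strictly below, all of `C` and all earlier entries -/
def Ex (C l : List ℕ) : Prop := ∀ k, k < l.length →
  ((∀ c ∈ C, c < l.getD k 0) ∧ ∀ i, i < k → l.getD i 0 < l.getD k 0) ∨
  ((∀ c ∈ C, l.getD k 0 < c) ∧ ∀ i, i < k → l.getD k 0 < l.getD i 0)

lemma Ex_congr {C C' l : List ℕ} (h : ∀ x, x ∈ C ↔ x ∈ C') : Ex C l ↔ Ex C' l := by
  unfold Ex
  constructor <;> intro H k hk <;> rcases H k hk with ⟨h1, h2⟩ | ⟨h1, h2⟩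
  · exact Or.inl ⟨fun c hc => h1 c ((h c).2 hc), h2⟩
  · exact Or.inr ⟨fun c hc => h1 c ((h c).2 hc), h2⟩
  · exact Or.inl ⟨fun c hc => h1 c ((h c).1 hc), h2⟩
  · exact Or.inr ⟨fun c hc => h1 c ((h c).1 hc), h2⟩

lemma Ex_append (C a b : List ℕ) : Ex C (a ++ b) ↔ Ex C a ∧ Ex (C ++ a) b := by
  constructor
  · intro H
    constructor
    · intro k hk
      have hk' : k < (a ++ b).length := by simp; omega
      rcases H k hk' with ⟨h1, h2⟩ | ⟨h1, h2⟩
      · left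
        rw [getD_app_left hk] at h1 h2
        exact ⟨h1, fun i hi => by
          have := h2 i hi; rwa [getD_app_left (by omega)] at this⟩
      · right
        rw [getD_app_left hk] at h1 h2
        exact ⟨h1, fun i hi => by
          have := h2 i hi; rwa [getD_app_left (by omega)] at this⟩
    · intro k hk
      have hk' : a.length + k < (a ++ b).length := by simp; omega
      have key : (a ++ b).getD (a.length + k) 0 = b.getD k 0 := by
        rw [getD_app_right (by omega)]; congr 1; omega
      rcases H (a.length + k) hk' with ⟨h1, h2⟩ | ⟨h1, h2⟩
      · left
        rw [key] at h1 h2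
        refine ⟨?_, ?_⟩
        · intro c hc
          rcases List.mem_append.1 hc with hc | hc
          · exact h1 c hc
          · obtain ⟨j, hj, rfl⟩ := mem_getD hc
            have := h2 j (by omega)
            rwa [getD_app_left hj] at this
        · intro i hi
          have := h2 (a.length + i) (by omega)
          rwa [getD_app_right (by omega), Nat.add_sub_cancel_left] at this
      · right
        rw [key] at h1 h2
        refine ⟨?_, ?_⟩
        · intro c hc
          rcases List.mem_append.1 hc with hc | hc
          · exact h1 c hc
          · obtain ⟨j, hj, rfl⟩ := mem_getD hc
            have := h2 j (by omega)
            rwa [getD_app_left hj] at this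
        · intro i hi
          have := h2 (a.length + i) (by omega)
          rwa [getD_app_right (by omega), Nat.add_sub_cancel_left] at this
  · rintro ⟨H1, H2⟩ k hk
    rw [List.length_append] at hk
    rcases lt_or_ge k a.length with hka | hka
    · rw [getD_app_left hka]
      rcases H1 k hka with ⟨h1, h2⟩ | ⟨h1, h2⟩
      · exact Or.inl ⟨h1, fun i hi => by rw [getD_app_left (by omega)]; exact h2 i hi⟩
      · exact Or.inr ⟨h1, fun i hi => by rw [getD_app_left (by omega)]; exact h2 i hi⟩
    · have hk2 : k - a.length < b.length := by omega
      have key : (a ++ b).getD k 0 = b.getD (k - a.length) 0 := getD_app_right hka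
      rw [key]
      rcases H2 (k - a.length) hk2 with ⟨h1, h2⟩ | ⟨h1, h2⟩
      · refine Or.inl ⟨fun c hc => h1 c (List.mem_append_left _ hc), fun i hi => ?_⟩
        rcases lt_or_ge i a.length with hia | hia
        · rw [getD_app_left hia]
          exact h1 _ (List.mem_append_right _ (getD_mem hia))
        · rw [getD_app_right hia]
          exact h2 _ (by omega)
      · refine Or.inr ⟨fun c hc => h1 c (List.mem_append_left _ hc), fun i hi => ?_⟩
        rcases lt_or_ge i a.length with hia | hia
        · rw [getD_app_left hia]
          exact h1 _ (List.mem_append_right _ (getD_mem hia))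
        · rw [getD_app_right hia]
          exact h2 _ (by omega)

lemma Ex_nil (C : List ℕ) : Ex C [] := by intro k hk; simp at hk

lemma Ex_singleton (C : List ℕ) (m : ℕ) :
    Ex C [m] ↔ (∀ c ∈ C, c < m) ∨ (∀ c ∈ C, m < c) := by
  unfold Ex
  constructor
  · intro H
    rcases H 0 (by simp) with ⟨h1, _⟩ | ⟨h1, _⟩
    · exact Or.inl h1
    · exact Or.inr h1
  · intro H k hk
    have : k = 0 := by simp at hk; omega
    subst this
    rcases H with h | h
    · exact Or.inl ⟨h, fun i hi => by omega⟩
    · exact Or.inr ⟨h, fun i hi => by omega⟩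

/-- Every "231-bottom" of `l` (relative to context `C`) is a strict prefix minimum whose
successor, if any, is larger, and lies below all of `C`. -/
def Dd (C l : List ℕ) : Prop := ∀ r, r < l.length →
  ((∃ p q, p < q ∧ q < r ∧ l.getD r 0 < l.getD p 0 ∧ l.getD p 0 < l.getD q 0) ∨
   (∃ c ∈ C, l.getD r 0 < c)) →
  ((∀ c ∈ C, l.getD r 0 < c) ∧ (∀ t, t < r → l.getD r 0 < l.getD t 0) ∧
   (r + 1 < l.length → l.getD r 0 < l.getD (r+1) 0))

lemma Dd_decomp (C L R : List ℕ) (m : ℕ) (hLm : ∀ x ∈ L, x < m) (hRm : ∀ x ∈ R, x < m)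
    (hCm : m ∉ C) :
    Dd C (L ++ m :: R) ↔ Dd C L ∧ Dd (C ++ L) R ∧
      ((∀ c ∈ C, c < m) ∨ ((∀ c ∈ C, m < c) ∧ L = [] ∧ R = [])) := by
  have hlen : (L ++ m :: R).length = L.length + 1 + R.length := by simp; omega
  have gL : ∀ t, t < L.length → (L ++ m :: R).getD t 0 = L.getD t 0 :=
    fun t ht => getD_app_left ht
  have gm : (L ++ m :: R).getD L.length 0 = m := by
    rw [getD_app_right le_rfl]; simp
  have gR : ∀ t, (L ++ m :: R).getD (L.length + 1 + t) 0 = R.getD t 0 := by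
    intro t
    rw [getD_app_right (by omega)]
    have : L.length + 1 + t - L.length = t + 1 := by omega
    rw [this, List.getD_cons_succ]
  constructor
  · intro H
    refine ⟨?_, ?_, ?_⟩
    · -- Dd C L
      intro r hr htrig
      have hr' : r < (L ++ m :: R).length := by omega
      have grr := gL r hr
      have conseq := H r hr' ?_
      · refine ⟨fun c hc => by rw [← grr]; exact conseq.1 c hc, fun t ht => ?_, fun hs => ?_⟩
        · have := conseq.2.1 t ht
          rwa [grr, gL t (by omega)] at this
        · have := conseq.2.2 (by omega)
          rwa [grr, gL (r+1) hs] at this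
      · rcases htrig with ⟨p, q, hpq, hqr, v1, v2⟩ | ⟨c, hc, hv⟩
        · exact Or.inl ⟨p, q, hpq, hqr, by
            rw [grr, gL p (by omega), gL q (by omega)]; exact ⟨v1, v2⟩⟩
        · exact Or.inr ⟨c, hc, by rw [grr]; exact hv⟩
    · -- Dd (C ++ L) R
      intro r' hr' htrig
      set r := L.length + 1 + r' with hrdef
      have hrσ : r < (L ++ m :: R).length := by omega
      have grr : (L ++ m :: R).getD r 0 = R.getD r' 0 := gR r'
      have conseq := H r hrσ ?_
      · refine ⟨fun c hc => ?_, fun t ht => ?_, fun hs => ?_⟩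
        · rcases List.mem_append.1 hc with hc | hc
          · have := conseq.1 c hc; rwa [grr] at this
          · obtain ⟨j, hj, rfl⟩ := mem_getD hc
            have := conseq.2.1 j (by omega)
            rwa [grr, gL j hj] at this
        · have := conseq.2.1 (L.length + 1 + t) (by omega)
          rwa [grr, gR t] at this
        · have := conseq.2.2 (by omega)
          rwa [grr, show r + 1 = L.length + 1 + (r' + 1) from by omega, gR (r'+1)] at this
      · rcases htrig with ⟨p, q, hpq, hqr, v1, v2⟩ | ⟨c, hc, hv⟩
        · refine Or.inl ⟨L.length + 1 + p, L.length + 1 + q, by omega, by omega, ?_⟩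
          rw [grr, gR p, gR q]; exact ⟨v1, v2⟩
        · rcases List.mem_append.1 hc with hc | hc
          · exact Or.inr ⟨c, hc, by rw [grr]; exact hv⟩
          · obtain ⟨j, hj, rfl⟩ := mem_getD hc
            refine Or.inl ⟨j, L.length, hj, by omega, ?_⟩
            rw [grr, gL j hj, gm]
            exact ⟨hv, hLm _ (getD_mem hj)⟩
    · -- m condition
      by_cases hc : ∀ c ∈ C, c < m
      · exact Or.inl hc
      · right
        push_neg at hc
        obtain ⟨c, hcC, hcm⟩ := hc
        have hmc : m < c := by
          rcases lt_or_eq_of_le hcm with h | h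
          · exact h
          · exact absurd (h ▸ hcC) hCm
        have conseq := H L.length (by omega) (Or.inr ⟨c, hcC, by rw [gm]; exact hmc⟩)
        refine ⟨fun c' hc' => by rw [← gm]; exact conseq.1 c' hc', ?_, ?_⟩
        · rw [← List.length_eq_zero_iff]
          by_contra hL0
          have h0 : (0:ℕ) < L.length := by omega
          have := conseq.2.1 0 h0
          rw [gm, gL 0 h0] at this
          exact absurd this (not_lt.2 (le_of_lt (hLm _ (getD_mem h0))))
        · rw [← List.length_eq_zero_iff]
          by_contra hR0
          have h0 : (0:ℕ) < R.length := by omega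
          have := conseq.2.2 (by omega)
          rw [gm, show L.length + 1 = L.length + 1 + 0 from by omega, gR 0] at this
          exact absurd this (not_lt.2 (le_of_lt (hRm _ (getD_mem h0))))
  · rintro ⟨h1, h2, h3⟩ r hr htrig
    rcases lt_trichotomy r L.length with hri | hri | hri
    · -- r in L
      have grr := gL r hri
      have conseq := h1 r hri ?_
      · refine ⟨fun c hc => by rw [grr]; exact conseq.1 c hc, fun t ht => ?_, fun hs => ?_⟩
        · rw [grr, gL t (by omega)]; exact conseq.2.1 t ht
        · rcases lt_or_eq_of_le (show r + 1 ≤ L.length from hri) with h | h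
          · rw [grr, gL (r+1) h]; exact conseq.2.2 h
          · rw [grr, show r + 1 = L.length from h, gm]
            exact hLm _ (getD_mem hri)
      · rcases htrig with ⟨p, q, hpq, hqr, v1, v2⟩ | ⟨c, hc, hv⟩
        · refine Or.inl ⟨p, q, hpq, hqr, ?_⟩
          rw [← grr, ← gL p (by omega), ← gL q (by omega)]; exact ⟨v1, v2⟩
        · exact Or.inr ⟨c, hc, by rw [← grr]; exact hv⟩
    · -- r = position of m
      subst hri
      rcases htrig with ⟨p, q, hpq, hqr, v1, v2⟩ | ⟨c, hc, hv⟩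
      · exfalso
        rw [gm, gL p (by omega)] at v1
        exact absurd v1 (not_lt.2 (le_of_lt (hLm _ (getD_mem (by omega)))))
      · rw [gm] at hv
        have h3' := h3.resolve_left (fun hall => absurd hv (not_lt.2 (le_of_lt (hall c hc))))
        obtain ⟨hall, hL, hR⟩ := h3'
        subst hL; subst hR
        refine ⟨fun c' hc' => by rw [gm]; exact hall c' hc', fun t ht => by simp at ht, fun hs => ?_⟩
        simp at hs
    · -- r in R
      set r' := r - L.length - 1 with hr'def
      have hrr : r = L.length + 1 + r' := by omega
      have hr'R : r' < R.length := by omega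
      have grr : (L ++ m :: R).getD r 0 = R.getD r' 0 := by rw [hrr]; exact gR r'
      have conseq := h2 r' hr'R ?_
      · refine ⟨fun c hc => by rw [grr]; exact conseq.1 c (List.mem_append_left _ hc),
          fun t ht => ?_, fun hs => ?_⟩
        · rcases lt_trichotomy t L.length with hti | hti | hti
          · rw [grr, gL t hti]
            exact conseq.1 _ (List.mem_append_right _ (getD_mem hti))
          · rw [grr, hti, gm]
            exact hRm _ (getD_mem hr'R)
          · have htr : t = L.length + 1 + (t - L.length - 1) := by omega
            rw [grr, htr, gR]
            exact conseq.2.1 _ (by omega)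
        · have hs' : r' + 1 < R.length := by omega
          rw [grr, show r + 1 = L.length + 1 + (r' + 1) from by omega, gR (r'+1)]
          exact conseq.2.2 hs'
      · rcases htrig with ⟨p, q, hpq, hqr, v1, v2⟩ | ⟨c, hc, hv⟩
        · rcases lt_trichotomy p L.length with hpi | hpi | hpi
          · refine Or.inr ⟨L.getD p 0, List.mem_append_right _ (getD_mem hpi), ?_⟩
            rw [← grr, ← gL p hpi]; exact v1
          · exfalso
            rw [hpi, gm] at v2
            have hq : q < (L ++ m :: R).length := by omega
            rcases lt_trichotomy q L.length with hqi | hqi | hqi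
            · omega
            · omega
            · rw [show q = L.length + 1 + (q - L.length - 1) from by omega, gR] at v2
              exact absurd v2 (not_lt.2 (le_of_lt (hRm _ (getD_mem (show q - L.length - 1 < R.length from by omega)))))
          · have hpq' : p = L.length + 1 + (p - L.length - 1) := by omega
            have hqq' : q = L.length + 1 + (q - L.length - 1) := by omega
            refine Or.inl ⟨p - L.length - 1, q - L.length - 1, by omega, by omega, ?_⟩
            rw [← gR (p - L.length - 1), ← gR (q - L.length - 1), ← hpq', ← hqq', ← grr]
            exact ⟨v1, v2⟩
        · exact Or.inr ⟨c, List.mem_append_left _ hc, by rw [← grr]; exact hv⟩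

lemma Dd_nil (C : List ℕ) : Dd C [] := by intro r hr; simp at hr

lemma main_iff : ∀ (l : List ℕ) (C : List ℕ), l.Nodup → (∀ x ∈ l, x ∉ C) →
    (Ex C (stackSort l) ↔ Dd C l) := by
  intro l
  generalize hn : l.length = n
  induction n using Nat.strong_induction_on generalizing l with
  | _ n ih =>
  subst hn
  intro C hnd hdisj
  rcases eq_or_ne l [] with rfl | hl
  · have : stackSort [] = [] := rfl
    rw [this]
    exact ⟨fun _ => Dd_nil C, fun _ => Ex_nil C⟩
  · have hlen : 0 < l.length := List.length_pos_iff.2 hl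
    have hm : l.foldr max 0 ∈ l := foldr_max_mem l hl
    have hi : l.idxOf (l.foldr max 0) < l.length := List.idxOf_lt_length_iff.2 hm
    set m := l.foldr max 0 with hmdef
    set i := l.idxOf m with hidef
    set L := l.take i with hLdef
    set R := l.drop (i+1) with hRdef
    have hsplit : L ++ m :: R = l := by
      conv_rhs => rw [← List.take_append_drop i l]
      rw [List.drop_eq_getElem_cons hi, List.getElem_idxOf hi]
    have hLlen : L.length = i := by rw [hLdef, List.length_take]; omega
    have hRlen : R.length = l.length - i - 1 := by rw [hRdef, List.length_drop]; omega
    -- nodup facts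
    have hnd' : (L ++ m :: R).Nodup := hsplit ▸ hnd
    have hndL : L.Nodup := hnd'.of_append_left
    have hndR : R.Nodup := (hnd'.of_append_right).of_cons
    have hdisjLmR : ∀ x ∈ L, x ∉ m :: R := fun x hx hx' =>
      (List.disjoint_of_nodup_append hnd') hx hx'
    have hmL : m ∉ L := fun hmx => hdisjLmR m hmx (List.mem_cons_self (a := m) (l := R))
    have hmR : m ∉ R := by
      have := hnd'.of_append_right
      exact (List.nodup_cons.1 this).1
    have hmemL : ∀ x ∈ L, x ∈ l := fun x hx => hsplit ▸ List.mem_append_left _ hx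
    have hmemR : ∀ x ∈ R, x ∈ l := fun x hx =>
      hsplit ▸ List.mem_append_right _ (List.mem_cons_of_mem _ hx)
    have hLm : ∀ x ∈ L, x < m := fun x hx =>
      lt_of_le_of_ne (le_foldr_max l x (hmemL x hx)) (fun h => hmL (h ▸ hx))
    have hRm : ∀ x ∈ R, x < m := fun x hx =>
      lt_of_le_of_ne (le_foldr_max l x (hmemR x hx)) (fun h => hmR (h ▸ hx))
    have hmC : m ∉ C := hdisj m hm
    have hdisjL : ∀ x ∈ L, x ∉ C := fun x hx => hdisj x (hmemL x hx)
    have hdisjR : ∀ x ∈ R, x ∉ C ++ L := by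
      intro x hx hx'
      rcases List.mem_append.1 hx' with h | h
      · exact hdisj x (hmemR x hx) h
      · exact hdisjLmR x h (List.mem_cons_of_mem _ hx)
    -- recursive structure
    have hdec : stackSort l = stackSort L ++ stackSort R ++ [m] := stackSort_decomp l hl
    have permL := stackSort_perm L
    have permR := stackSort_perm R
    have ihL : Ex C (stackSort L) ↔ Dd C L :=
      ih L.length (by omega) L rfl C hndL hdisjL
    have ihR : Ex (C ++ L) (stackSort R) ↔ Dd (C ++ L) R :=
      ih R.length (by omega) R rfl (C ++ L) hndR hdisjR
    rw [hdec, Ex_append, Ex_append, ihL]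
    rw [Ex_congr (C := C ++ stackSort L) (C' := C ++ L)
      (fun x => by simp [List.mem_append, permL.mem_iff]), ihR]
    rw [Ex_singleton]
    rw [← hsplit, Dd_decomp C L R m hLm hRm hmC]
    constructor
    · rintro ⟨⟨hDL, hDR⟩, hsing⟩
      refine ⟨hDL, hDR, ?_⟩
      rcases hsing with h | h
      · left
        intro c hc
        exact h c (List.mem_append_left _ hc)
      · right
        refine ⟨fun c hc => h c (List.mem_append_left _ hc), ?_, ?_⟩
        · rw [List.eq_nil_iff_forall_not_mem]
          intro x hx
          have h1 := h x (List.mem_append_right _ (List.mem_append_left _ (permL.mem_iff.2 hx)))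
          exact absurd h1 (not_lt.2 (le_of_lt (hLm x hx)))
        · rw [List.eq_nil_iff_forall_not_mem]
          intro x hx
          have h1 := h x (List.mem_append_right _ (List.mem_append_right _ (permR.mem_iff.2 hx)))
          exact absurd h1 (not_lt.2 (le_of_lt (hRm x hx)))
    · rintro ⟨hDL, hDR, hsing⟩
      refine ⟨⟨hDL, hDR⟩, ?_⟩
      rcases hsing with h | ⟨h, hL0, hR0⟩
      · left
        intro c hc
        rcases List.mem_append.1 hc with hc | hc
        · exact h c hc
        · rcases List.mem_append.1 hc with hc | hc
          · exact hLm c (permL.mem_iff.1 hc)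
          · exact hRm c (permR.mem_iff.1 hc)
      · right
        intro c hc
        rcases List.mem_append.1 hc with hc | hc
        · exact h c hc
        · rcases List.mem_append.1 hc with hc | hc
          · exact absurd (permL.mem_iff.1 hc) (by rw [hL0]; simp)
          · exact absurd (permR.mem_iff.1 hc) (by rw [hR0]; simp)

lemma get_getD {t : List ℕ} (x : Fin t.length) : t.get x = t.getD x.val 0 := by
  rw [List.get_eq_getElem, List.getD_eq_getElem _ _ x.isLt]

lemma c132_iff (t : List ℕ) : Contains [1,3,2] t ↔
    ∃ i j k, i < j ∧ j < k ∧ k < t.length ∧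
      t.getD i 0 < t.getD k 0 ∧ t.getD k 0 < t.getD j 0 := by
  constructor
  · rintro ⟨f, hf, hv⟩
    refine ⟨f ⟨0, by decide⟩, f ⟨1, by decide⟩, f ⟨2, by decide⟩,
      hf (by decide), hf (by decide), (f ⟨2, by decide⟩).isLt, ?_, ?_⟩
    · have := (hv ⟨0, by decide⟩ ⟨2, by decide⟩).1 (by decide)
      rwa [get_getD, get_getD] at this
    · have := (hv ⟨2, by decide⟩ ⟨1, by decide⟩).1 (by decide)
      rwa [get_getD, get_getD] at this
  · rintro ⟨i, j, k, hij, hjk, hk, v1, v2⟩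
    have hi' : i < t.length := by omega
    have hj' : j < t.length := by omega
    rw [List.getD_eq_getElem _ _ hi', List.getD_eq_getElem _ _ hk] at v1
    rw [List.getD_eq_getElem _ _ hk, List.getD_eq_getElem _ _ hj'] at v2
    refine ⟨![⟨i, by omega⟩, ⟨j, by omega⟩, ⟨k, by omega⟩], ?_, ?_⟩
    · intro a b hab
      fin_cases a <;> fin_cases b <;> simp_all [Fin.lt_def] <;> omega
    · intro a b
      fin_cases a <;> fin_cases b <;> simp [List.get_eq_getElem] <;> omega

lemma c312_iff (t : List ℕ) : Contains [3,1,2] t ↔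
    ∃ i j k, i < j ∧ j < k ∧ k < t.length ∧
      t.getD j 0 < t.getD k 0 ∧ t.getD k 0 < t.getD i 0 := by
  constructor
  · rintro ⟨f, hf, hv⟩
    refine ⟨f ⟨0, by decide⟩, f ⟨1, by decide⟩, f ⟨2, by decide⟩,
      hf (by decide), hf (by decide), (f ⟨2, by decide⟩).isLt, ?_, ?_⟩
    · have := (hv ⟨1, by decide⟩ ⟨2, by decide⟩).1 (by decide)
      rwa [get_getD, get_getD] at this
    · have := (hv ⟨2, by decide⟩ ⟨0, by decide⟩).1 (by decide)
      rwa [get_getD, get_getD] at this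
  · rintro ⟨i, j, k, hij, hjk, hk, v1, v2⟩
    have hi' : i < t.length := by omega
    have hj' : j < t.length := by omega
    rw [List.getD_eq_getElem _ _ hj', List.getD_eq_getElem _ _ hk] at v1
    rw [List.getD_eq_getElem _ _ hk, List.getD_eq_getElem _ _ hi'] at v2
    refine ⟨![⟨i, by omega⟩, ⟨j, by omega⟩, ⟨k, by omega⟩], ?_, ?_⟩
    · intro a b hab
      fin_cases a <;> fin_cases b <;> simp_all [Fin.lt_def] <;> omega
    · intro a b
      fin_cases a <;> fin_cases b <;> simp [List.get_eq_getElem] <;> omega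

lemma c1342_iff (t : List ℕ) : Contains [1,3,4,2] t ↔
    ∃ i j k l, i < j ∧ j < k ∧ k < l ∧ l < t.length ∧
      t.getD i 0 < t.getD l 0 ∧ t.getD l 0 < t.getD j 0 ∧ t.getD j 0 < t.getD k 0 := by
  constructor
  · rintro ⟨f, hf, hv⟩
    refine ⟨f ⟨0, by decide⟩, f ⟨1, by decide⟩, f ⟨2, by decide⟩, f ⟨3, by decide⟩,
      hf (by decide), hf (by decide), hf (by decide), (f ⟨3, by decide⟩).isLt, ?_, ?_, ?_⟩
    · have := (hv ⟨0, by decide⟩ ⟨3, by decide⟩).1 (by decide)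
      rwa [get_getD, get_getD] at this
    · have := (hv ⟨3, by decide⟩ ⟨1, by decide⟩).1 (by decide)
      rwa [get_getD, get_getD] at this
    · have := (hv ⟨1, by decide⟩ ⟨2, by decide⟩).1 (by decide)
      rwa [get_getD, get_getD] at this
  · rintro ⟨i, j, k, l, hij, hjk, hkl, hl, v1, v2, v3⟩
    have hi' : i < t.length := by omega
    have hj' : j < t.length := by omega
    have hk' : k < t.length := by omega
    rw [List.getD_eq_getElem _ _ hi', List.getD_eq_getElem _ _ hl] at v1
    rw [List.getD_eq_getElem _ _ hl, List.getD_eq_getElem _ _ hj'] at v2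
    rw [List.getD_eq_getElem _ _ hj', List.getD_eq_getElem _ _ hk'] at v3
    refine ⟨![⟨i, by omega⟩, ⟨j, by omega⟩, ⟨k, by omega⟩, ⟨l, by omega⟩], ?_, ?_⟩
    · intro a b hab
      fin_cases a <;> fin_cases b <;> simp_all [Fin.lt_def] <;> omega
    · intro a b
      fin_cases a <;> fin_cases b <;> simp [List.get_eq_getElem, show ((3:Fin 4):ℕ) = 3 from rfl] <;> omega

lemma c3142_iff (t : List ℕ) : Contains [3,1,4,2] t ↔
    ∃ i j k l, i < j ∧ j < k ∧ k < l ∧ l < t.length ∧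
      t.getD j 0 < t.getD l 0 ∧ t.getD l 0 < t.getD i 0 ∧ t.getD i 0 < t.getD k 0 := by
  constructor
  · rintro ⟨f, hf, hv⟩
    refine ⟨f ⟨0, by decide⟩, f ⟨1, by decide⟩, f ⟨2, by decide⟩, f ⟨3, by decide⟩,
      hf (by decide), hf (by decide), hf (by decide), (f ⟨3, by decide⟩).isLt, ?_, ?_, ?_⟩
    · have := (hv ⟨1, by decide⟩ ⟨3, by decide⟩).1 (by decide)
      rwa [get_getD, get_getD] at this
    · have := (hv ⟨3, by decide⟩ ⟨0, by decide⟩).1 (by decide)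
      rwa [get_getD, get_getD] at this
    · have := (hv ⟨0, by decide⟩ ⟨2, by decide⟩).1 (by decide)
      rwa [get_getD, get_getD] at this
  · rintro ⟨i, j, k, l, hij, hjk, hkl, hl, v1, v2, v3⟩
    have hi' : i < t.length := by omega
    have hj' : j < t.length := by omega
    have hk' : k < t.length := by omega
    rw [List.getD_eq_getElem _ _ hj', List.getD_eq_getElem _ _ hl] at v1
    rw [List.getD_eq_getElem _ _ hl, List.getD_eq_getElem _ _ hi'] at v2
    rw [List.getD_eq_getElem _ _ hi', List.getD_eq_getElem _ _ hk'] at v3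
    refine ⟨![⟨i, by omega⟩, ⟨j, by omega⟩, ⟨k, by omega⟩, ⟨l, by omega⟩], ?_, ?_⟩
    · intro a b hab
      fin_cases a <;> fin_cases b <;> simp_all [Fin.lt_def] <;> omega
    · intro a b
      fin_cases a <;> fin_cases b <;> simp [List.get_eq_getElem, show ((3:Fin 4):ℕ) = 3 from rfl] <;> omega

lemma c3412_iff (t : List ℕ) : Contains [3,4,1,2] t ↔
    ∃ i j k l, i < j ∧ j < k ∧ k < l ∧ l < t.length ∧
      t.getD k 0 < t.getD l 0 ∧ t.getD l 0 < t.getD i 0 ∧ t.getD i 0 < t.getD j 0 := by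
  constructor
  · rintro ⟨f, hf, hv⟩
    refine ⟨f ⟨0, by decide⟩, f ⟨1, by decide⟩, f ⟨2, by decide⟩, f ⟨3, by decide⟩,
      hf (by decide), hf (by decide), hf (by decide), (f ⟨3, by decide⟩).isLt, ?_, ?_, ?_⟩
    · have := (hv ⟨2, by decide⟩ ⟨3, by decide⟩).1 (by decide)
      rwa [get_getD, get_getD] at this
    · have := (hv ⟨3, by decide⟩ ⟨0, by decide⟩).1 (by decide)
      rwa [get_getD, get_getD] at this
    · have := (hv ⟨0, by decide⟩ ⟨1, by decide⟩).1 (by decide)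
      rwa [get_getD, get_getD] at this
  · rintro ⟨i, j, k, l, hij, hjk, hkl, hl, v1, v2, v3⟩
    have hi' : i < t.length := by omega
    have hj' : j < t.length := by omega
    have hk' : k < t.length := by omega
    rw [List.getD_eq_getElem _ _ hk', List.getD_eq_getElem _ _ hl] at v1
    rw [List.getD_eq_getElem _ _ hl, List.getD_eq_getElem _ _ hi'] at v2
    rw [List.getD_eq_getElem _ _ hi', List.getD_eq_getElem _ _ hj'] at v3
    refine ⟨![⟨i, by omega⟩, ⟨j, by omega⟩, ⟨k, by omega⟩, ⟨l, by omega⟩], ?_, ?_⟩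
    · intro a b hab
      fin_cases a <;> fin_cases b <;> simp_all [Fin.lt_def] <;> omega
    · intro a b
      fin_cases a <;> fin_cases b <;> simp [List.get_eq_getElem, show ((3:Fin 4):ℕ) = 3 from rfl] <;> omega

lemma cv_iff (σ : List ℕ) : Contains3421v σ ↔
    ∃ i j k, i < j ∧ j < k ∧ k + 1 < σ.length ∧
      σ.getD (k+1) 0 < σ.getD k 0 ∧ σ.getD k 0 < σ.getD i 0 ∧ σ.getD i 0 < σ.getD j 0 := by
  constructor
  · rintro ⟨i1, i2, i3, i4, h12, h23, h34, heq, w1, w2, w3⟩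
    rw [get_getD, get_getD] at w1 w2 w3
    refine ⟨i1, i2, i3, h12, h23, by rw [← heq]; exact i4.isLt, ?_, ?_, ?_⟩
    · rwa [← heq]
    · exact w2
    · exact w3
  · rintro ⟨i, j, k, hij, hjk, hs, w1, w2, w3⟩
    refine ⟨⟨i, by omega⟩, ⟨j, by omega⟩, ⟨k, by omega⟩, ⟨k+1, hs⟩,
      hij, hjk, by simp [Fin.lt_def], rfl, ?_, ?_, ?_⟩ <;>
      rw [get_getD, get_getD] <;> assumption

lemma getD_ne {t : List ℕ} (hnd : t.Nodup) {i j : ℕ} (hi : i < t.length) (hj : j < t.length)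
    (hij : i ≠ j) : t.getD i 0 ≠ t.getD j 0 := by
  rw [List.getD_eq_getElem _ _ hi, List.getD_eq_getElem _ _ hj]
  exact fun h => hij (hnd.getElem_inj_iff.1 h)

lemma lhs_iff (t : List ℕ) (hnd : t.Nodup) :
    (Avoids t [1,3,2] ∧ Avoids t [3,1,2]) ↔ Ex [] t := by
  constructor
  · rintro ⟨h1, h2⟩ k hk
    by_contra hcon
    push_neg at hcon
    obtain ⟨i, hik, hle1⟩ := hcon.1 (by simp)
    obtain ⟨j, hjk, hle2⟩ := hcon.2 (by simp)
    have h1' : t.getD k 0 < t.getD i 0 :=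
      lt_of_le_of_ne hle1 (getD_ne hnd hk (by omega) (by omega))
    have h2' : t.getD j 0 < t.getD k 0 :=
      lt_of_le_of_ne hle2 (getD_ne hnd (by omega) hk (by omega))
    rcases lt_trichotomy i j with h | h | h
    · exact h2 ((c312_iff t).2 ⟨i, j, k, h, hjk, hk, h2', h1'⟩)
    · subst h; omega
    · exact h1 ((c132_iff t).2 ⟨j, i, k, h, hik, hk, h2', h1'⟩)
  · intro hEx
    constructor <;> intro hcon
    · obtain ⟨i, j, k, hij, hjk, hk, v1, v2⟩ := (c132_iff t).1 hcon
      rcases hEx k hk with ⟨-, hall⟩ | ⟨-, hall⟩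
      · have := hall j (by omega); omega
      · have := hall i (by omega); omega
    · obtain ⟨i, j, k, hij, hjk, hk, v1, v2⟩ := (c312_iff t).1 hcon
      rcases hEx k hk with ⟨-, hall⟩ | ⟨-, hall⟩
      · have := hall i (by omega); omega
      · have := hall j (by omega); omega

lemma rhs_iff (σ : List ℕ) (hnd : σ.Nodup) :
    (Avoids σ [1,3,4,2] ∧ Avoids σ [3,1,4,2] ∧ Avoids σ [3,4,1,2] ∧ ¬ Contains3421v σ) ↔
      Dd [] σ := by
  constructor
  · rintro ⟨a1, a2, a3, a4⟩ r hr htrig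
    rcases htrig with ⟨p, q, hpq, hqr, v1, v2⟩ | ⟨c, hc, -⟩
    · refine ⟨by simp, ?_, ?_⟩
      · intro u hu
        by_contra hle
        push_neg at hle
        have hlt : σ.getD u 0 < σ.getD r 0 :=
          lt_of_le_of_ne hle (getD_ne hnd (by omega) hr (by omega))
        have hup : u ≠ p := fun h => by subst h; omega
        have huq : u ≠ q := fun h => by subst h; omega
        rcases lt_trichotomy u p with h | h | h
        · exact a1 ((c1342_iff σ).2 ⟨u, p, q, r, h, hpq, hqr, hr, hlt, v1, v2⟩)
        · exact absurd h hup
        · rcases lt_trichotomy u q with h' | h' | h'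
          · exact a2 ((c3142_iff σ).2 ⟨p, u, q, r, h, h', hqr, hr, hlt, v1, v2⟩)
          · exact absurd h' huq
          · exact a3 ((c3412_iff σ).2 ⟨p, q, u, r, hpq, h', hu, hr, hlt, v1, v2⟩)
      · intro hs
        by_contra hle
        push_neg at hle
        have hlt : σ.getD (r+1) 0 < σ.getD r 0 :=
          lt_of_le_of_ne hle (getD_ne hnd hs hr (by omega))
        exact a4 ((cv_iff σ).2 ⟨p, q, r, hpq, hqr, hs, hlt, v1, v2⟩)
    · simp at hc
  · intro hD
    refine ⟨?_, ?_, ?_, ?_⟩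
    · intro hcon
      obtain ⟨i, j, k, l, hij, hjk, hkl, hl, v1, v2, v3⟩ := (c1342_iff σ).1 hcon
      have := (hD l hl (Or.inl ⟨j, k, hjk, hkl, v2, v3⟩)).2.1 i (by omega)
      omega
    · intro hcon
      obtain ⟨i, j, k, l, hij, hjk, hkl, hl, v1, v2, v3⟩ := (c3142_iff σ).1 hcon
      have := (hD l hl (Or.inl ⟨i, k, by omega, hkl, v2, v3⟩)).2.1 j (by omega)
      omega
    · intro hcon
      obtain ⟨i, j, k, l, hij, hjk, hkl, hl, v1, v2, v3⟩ := (c3412_iff σ).1 hcon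
      have := (hD l hl (Or.inl ⟨i, j, hij, by omega, v2, v3⟩)).2.1 k (by omega)
      omega
    · intro hcon
      obtain ⟨i, j, k, hij, hjk, hs, w1, w2, w3⟩ := (cv_iff σ).1 hcon
      have := (hD k (by omega) (Or.inl ⟨i, j, hij, hjk, w2, w3⟩)).2.2 hs
      omega


/-- `s⁻¹(Av(132,312)) = Av(1342, 3142, 3412, 342̲1̲)`. -/
theorem stmt7 (n : ℕ) (σ : List ℕ) (hσ : σ.Perm (List.range' 1 n)) :
    (Avoids (stackSort σ) [1, 3, 2] ∧ Avoids (stackSort σ) [3, 1, 2]) ↔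
      Avoids σ [1, 3, 4, 2] ∧ Avoids σ [3, 1, 4, 2] ∧ Avoids σ [3, 4, 1, 2] ∧
        ¬ Contains3421v σ := by
  have hnd : σ.Nodup := hσ.nodup_iff.2 (List.nodup_range' (s := 1) (n := n))
  have tnd : (stackSort σ).Nodup := (stackSort_perm σ).nodup_iff.2 hnd
  exact (lhs_iff _ tnd).trans
    ((main_iff σ [] hnd (fun x _ => by simp)).trans (rhs_iff σ hnd).symm)
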